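/- Let Δ > 0. Define Q⁻_inf(r) = (2^{−r} + r·ln 2 − 1)/(2^{−Δ} + Δ·ln 2 − 1), Q⁻_max(r) = Q⁻(−1, r), and, with X = 2^Δ, r* = log₂( (2X·ln X − X·ln(2X − 1)) / (2X·ln X − 2X·ln(2X − 1) + 2X − 2) ). Then for all real i ≤ −1, c ≤ −1 and all r with 0 ≤ r < Δ, |Q⁻(i, r) − Q⁻(c, r)| < Q⁻_max(r*) − Q⁻_inf(r*). -/

import Mathlib

open Real Set



/-- Φ⁻(x) = log₂(1 − 2^x) -/
noncomputable def Phim (x : ℝ) : ℝ := Real.logb 2 (1 - (2:ℝ) ^ x)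

/-- (Φ⁻)'(x) = −2^x / (1 − 2^x) -/
noncomputable def dPhim (x : ℝ) : ℝ := -(2:ℝ) ^ x / (1 - (2:ℝ) ^ x)

/-- First-order Taylor remainder E⁻(i, r) -/
noncomputable def Em (i r : ℝ) : ℝ := Phim (i - r) - Phim i + r * dPhim i

/-- Error ratio Q⁻(i, r) = E⁻(i, r)/E⁻(i, Δ) -/
noncomputable def Qm (Δ i r : ℝ) : ℝ := Em i r / Em i Δ

/-- Q⁻_inf(r) = (2^{−r} + r·ln 2 − 1)/(2^{−Δ} + Δ·ln 2 − 1) -/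
noncomputable def QmInf (Δ r : ℝ) : ℝ :=
  ((2:ℝ) ^ (-r) + r * Real.log 2 - 1) / ((2:ℝ) ^ (-Δ) + Δ * Real.log 2 - 1)

/-- Q⁻_max(r) = Q⁻(−1, r) -/
noncomputable def QmMax (Δ r : ℝ) : ℝ := Qm Δ (-1) r

/-- r* for the subtraction case, with X = 2^Δ -/
noncomputable def rStarM (Δ : ℝ) : ℝ :=
  Real.logb 2
    ((2 * (2:ℝ) ^ Δ * Real.log ((2:ℝ) ^ Δ) - (2:ℝ) ^ Δ * Real.log (2 * (2:ℝ) ^ Δ - 1)) /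
      (2 * (2:ℝ) ^ Δ * Real.log ((2:ℝ) ^ Δ) - 2 * (2:ℝ) ^ Δ * Real.log (2 * (2:ℝ) ^ Δ - 1)
        + 2 * (2:ℝ) ^ Δ - 2))



noncomputable def H0 (s : ℝ) : ℝ := s - 1 - Real.log s
noncomputable def Ht (t s : ℝ) : ℝ :=
  Real.log (1 - t) - Real.log (1 - t*s) - t/(1-t) * Real.log s
noncomputable def K0 (s : ℝ) : ℝ := (1 - s)/s
noncomputable def Kt (t s : ℝ) : ℝ := t*(1-s)/((1-t)*s*(1-t*s))

lemma H0_deriv {s : ℝ} (hs : 0 < s) : HasDerivAt H0 (-(K0 s)) s := by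
  have h := ((hasDerivAt_id s).sub_const 1).sub (Real.hasDerivAt_log hs.ne')
  exact h.congr_deriv (by unfold K0; field_simp; ring)

lemma Ht_deriv {t s : ℝ} (ht0 : 0 < t) (ht1 : t < 1) (hs : 0 < s) (hts : t*s < 1) :
    HasDerivAt (Ht t) (-(Kt t s)) s := by
  have e1 : (1:ℝ) - t ≠ 0 := by linarith
  have e2 : s ≠ 0 := hs.ne'
  have e3 : (1:ℝ) - t*s ≠ 0 := by linarith
  have h1 : HasDerivAt (fun x : ℝ => 1 - t*x) (-t) s := by
    simpa using ((hasDerivAt_id s).const_mul t).const_sub 1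
  have h2 : HasDerivAt (fun x : ℝ => Real.log (1 - t*x)) ((1-t*s)⁻¹ * (-t)) s :=
    by have := (Real.hasDerivAt_log e3).comp s h1; exact this
  have h3 : HasDerivAt (fun x : ℝ => t/(1-t) * Real.log x) (t/(1-t) * s⁻¹) s :=
    (Real.hasDerivAt_log hs.ne').const_mul _
  have h := ((hasDerivAt_const s (Real.log (1-t))).sub h2).sub h3
  exact h.congr_deriv (by unfold Kt; field_simp; ring)

lemma H0_one : H0 1 = 0 := by simp [H0]

lemma Ht_one {t : ℝ} : Ht t 1 = 0 := by simp [Ht]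

lemma K0_pos {s : ℝ} (h0 : 0 < s) (h1 : s < 1) : 0 < K0 s := by
  unfold K0; exact div_pos (by linarith) h0

lemma Kt_pos {t s : ℝ} (ht0 : 0 < t) (ht1 : t < 1) (h0 : 0 < s) (h1 : s < 1) :
    0 < Kt t s := by
  have hts : t*s < 1 := by nlinarith
  unfold Kt
  have hd : 0 < (1-t)*s*(1-t*s) :=
    mul_pos (mul_pos (by linarith) h0) (by linarith)
  exact div_pos (mul_pos ht0 (by linarith)) hd

lemma H0_pos {s : ℝ} (h0 : 0 < s) (h1 : s < 1) : 0 < H0 s := by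
  have anti : StrictAntiOn H0 (Icc s 1) := by
    apply strictAntiOn_of_deriv_neg (convex_Icc s 1)
    · intro x hx
      exact (H0_deriv (lt_of_lt_of_le h0 hx.1)).continuousAt.continuousWithinAt
    · intro x hx
      rw [interior_Icc] at hx
      rw [(H0_deriv (h0.trans hx.1)).deriv]
      simpa using K0_pos (h0.trans hx.1) hx.2
  have := anti (by constructor <;> linarith) (by constructor <;> linarith : (1:ℝ) ∈ Icc s 1) h1
  rwa [H0_one] at this

lemma Ht_pos {t s : ℝ} (ht0 : 0 < t) (ht1 : t < 1) (h0 : 0 < s) (h1 : s < 1) :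
    0 < Ht t s := by
  have anti : StrictAntiOn (Ht t) (Icc s 1) := by
    apply strictAntiOn_of_deriv_neg (convex_Icc s 1)
    · intro x hx
      have hx0 : 0 < x := lt_of_lt_of_le h0 hx.1
      have : t*x < 1 := by nlinarith [hx.2]
      exact (Ht_deriv ht0 ht1 hx0 this).continuousAt.continuousWithinAt
    · intro x hx
      rw [interior_Icc] at hx
      have hx0 : 0 < x := h0.trans hx.1
      have hx1 : x < 1 := hx.2
      have : t*x < 1 := by nlinarith
      rw [(Ht_deriv ht0 ht1 hx0 this).deriv]
      simpa using Kt_pos ht0 ht1 hx0 hx1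
  have := anti (by constructor <;> linarith) (by constructor <;> linarith : (1:ℝ) ∈ Icc s 1) h1
  rwa [Ht_one] at this

/-- Core comparison: if the kernel ratio κb/κa is strictly increasing,
then the normalized tail ratio is strictly larger for b. -/
lemma core_comparison (a b κa κb : ℝ → ℝ) (S s : ℝ)
    (hS : 0 < S) (hSs : S < s) (hs1 : s < 1)
    (ha : ∀ u ∈ Icc S 1, HasDerivAt a (-(κa u)) u)
    (hb : ∀ u ∈ Icc S 1, HasDerivAt b (-(κb u)) u)
    (hκa : ∀ u ∈ Ico S 1, 0 < κa u)
    (hκb : ∀ u ∈ Ico S 1, 0 < κb u)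
    (hmono : ∀ u v, S ≤ u → u < v → v < 1 → κb u * κa v < κa u * κb v)
    (ha1 : a 1 = 0) (hb1 : b 1 = 0) :
    a s / a S < b s / b S := by
  have hs0 : 0 < s := hS.trans hSs
  -- a and b are positive on [S, 1)
  have hapos : ∀ u ∈ Ico S 1, 0 < a u := by
    intro u hu
    have anti : StrictAntiOn a (Icc u 1) := by
      apply strictAntiOn_of_deriv_neg (convex_Icc u 1)
      · intro x hx
        exact (ha x ⟨hu.1.trans hx.1, hx.2⟩).continuousAt.continuousWithinAt
      · intro x hx
        rw [interior_Icc] at hx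
        rw [(ha x ⟨hu.1.trans hx.1.le, hx.2.le⟩).deriv]
        simpa using hκa x ⟨hu.1.trans hx.1.le, hx.2⟩
    have := anti (left_mem_Icc.mpr hu.2.le) (right_mem_Icc.mpr hu.2.le) hu.2
    rwa [ha1] at this
  have hbpos : ∀ u ∈ Ico S 1, 0 < b u := by
    intro u hu
    have anti : StrictAntiOn b (Icc u 1) := by
      apply strictAntiOn_of_deriv_neg (convex_Icc u 1)
      · intro x hx
        exact (hb x ⟨hu.1.trans hx.1, hx.2⟩).continuousAt.continuousWithinAt
      · intro x hx
        rw [interior_Icc] at hx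
        rw [(hb x ⟨hu.1.trans hx.1.le, hx.2.le⟩).deriv]
        simpa using hκb x ⟨hu.1.trans hx.1.le, hx.2⟩
    have := anti (left_mem_Icc.mpr hu.2.le) (right_mem_Icc.mpr hu.2.le) hu.2
    rwa [hb1] at this
  -- key: κa u * b u - κb u * a u > 0 on [S,1)
  have hkey : ∀ u ∈ Ico S 1, 0 < κa u * b u - κb u * a u := by
    intro u hu
    set ψ : ℝ → ℝ := fun v => κa u * b v - κb u * a v with hψ
    have anti : StrictAntiOn ψ (Icc u 1) := by
      apply strictAntiOn_of_deriv_neg (convex_Icc u 1)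
      · intro x hx
        have hx' : x ∈ Icc S 1 := ⟨hu.1.trans hx.1, hx.2⟩
        exact (((hb x hx').const_mul (κa u)).sub
          ((ha x hx').const_mul (κb u))).continuousAt.continuousWithinAt
      · intro x hx
        rw [interior_Icc] at hx
        have hx' : x ∈ Icc S 1 := ⟨hu.1.trans hx.1.le, hx.2.le⟩
        rw [(show HasDerivAt ψ _ x from ((hb x hx').const_mul (κa u)).sub ((ha x hx').const_mul (κb u))).deriv]
        have := hmono u x hu.1 hx.1 hx.2
        nlinarith [this]
    have := anti (left_mem_Icc.mpr hu.2.le) (right_mem_Icc.mpr hu.2.le) hu.2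
    simp only [hψ, ha1, hb1, mul_zero, sub_zero] at this
    linarith
  -- ratio b/a strictly increasing on [S, s]
  have hmonoratio : StrictMonoOn (fun u => b u / a u) (Icc S s) := by
    apply strictMonoOn_of_deriv_pos (convex_Icc S s)
    · intro x hx
      have hx' : x ∈ Icc S 1 := ⟨hx.1, hx.2.trans hs1.le⟩
      have hax : a x ≠ 0 := (hapos x ⟨hx.1, lt_of_le_of_lt hx.2 hs1⟩).ne'
      exact (((hb x hx').div (ha x hx') hax)).continuousAt.continuousWithinAt
    · intro x hx
      rw [interior_Icc] at hx
      have hxI : x ∈ Ico S 1 := ⟨hx.1.le, hx.2.trans hs1⟩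
      have hx' : x ∈ Icc S 1 := ⟨hx.1.le, (hx.2.trans hs1).le⟩
      have hax : 0 < a x := hapos x hxI
      rw [(show HasDerivAt (fun u => b u / a u) _ x from (hb x hx').div (ha x hx') hax.ne').deriv]
      have hk := hkey x hxI
      have : -κb x * a x - b x * -κa x = κa x * b x - κb x * a x := by ring
      rw [this]
      positivity
  have h1 := hmonoratio (left_mem_Icc.mpr hSs.le) (right_mem_Icc.mpr hSs.le) hSs
  have haS : 0 < a S := hapos S ⟨le_refl _, hSs.trans hs1⟩
  have has : 0 < a s := hapos s ⟨hSs.le, hs1⟩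
  have hbS : 0 < b S := hbpos S ⟨le_refl _, hSs.trans hs1⟩
  have hbs : 0 < b s := hbpos s ⟨hSs.le, hs1⟩
  simp only at h1
  rw [div_lt_div_iff₀ haS has] at h1
  rw [div_lt_div_iff₀ haS hbS]
  linarith

lemma inst1 {t S s : ℝ} (ht0 : 0 < t) (ht1 : t < 1) (hS : 0 < S) (hSs : S < s)
    (hs1 : s < 1) : H0 s / H0 S < Ht t s / Ht t S := by
  apply core_comparison H0 (Ht t) K0 (Kt t) S s hS hSs hs1
  · intro u hu; exact H0_deriv (hS.trans_le hu.1)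
  · intro u hu
    have hu0 : 0 < u := hS.trans_le hu.1
    have : t*u < 1 := by nlinarith [hu.2]
    exact Ht_deriv ht0 ht1 hu0 this
  · intro u hu; exact K0_pos (hS.trans_le hu.1) hu.2
  · intro u hu; exact Kt_pos ht0 ht1 (hS.trans_le hu.1) hu.2
  · intro u v hu huv hv
    have hu0 : 0 < u := hS.trans_le hu
    have hv0 : 0 < v := hu0.trans huv
    have hu1 : u < 1 := huv.trans hv
    have htu : t*u < 1 := by nlinarith
    have htv : t*v < 1 := by nlinarith
    unfold K0 Kt
    rw [div_mul_div_comm, div_mul_div_comm, div_lt_div_iff₀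
      (mul_pos (mul_pos (mul_pos (by linarith : (0:ℝ) < 1-t) hu0)
        (by linarith : (0:ℝ) < 1-t*u)) hv0)
      (mul_pos hu0 (mul_pos (mul_pos (by linarith : (0:ℝ) < 1-t) hv0)
        (by linarith : (0:ℝ) < 1-t*v)))]
    nlinarith [mul_pos (mul_pos (mul_pos ht0 (by linarith : (0:ℝ) < 1-u))
      (by linarith : (0:ℝ) < 1-v)) (mul_pos (mul_pos (by linarith : (0:ℝ) < 1-t) hu0) hv0),
      mul_lt_mul_of_pos_left huv ht0]
  · exact H0_one
  · exact Ht_one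

lemma inst2 {t₁ t₂ S s : ℝ} (h1 : 0 < t₁) (h12 : t₁ < t₂) (h2 : t₂ < 1)
    (hS : 0 < S) (hSs : S < s) (hs1 : s < 1) :
    Ht t₁ s / Ht t₁ S < Ht t₂ s / Ht t₂ S := by
  have h10 : t₁ < 1 := h12.trans h2
  have h20 : 0 < t₂ := h1.trans h12
  apply core_comparison (Ht t₁) (Ht t₂) (Kt t₁) (Kt t₂) S s hS hSs hs1
  · intro u hu
    have hu0 : 0 < u := hS.trans_le hu.1
    have : t₁*u < 1 := by nlinarith [hu.2]
    exact Ht_deriv h1 h10 hu0 this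
  · intro u hu
    have hu0 : 0 < u := hS.trans_le hu.1
    have : t₂*u < 1 := by nlinarith [hu.2]
    exact Ht_deriv h20 h2 hu0 this
  · intro u hu; exact Kt_pos h1 h10 (hS.trans_le hu.1) hu.2
  · intro u hu; exact Kt_pos h20 h2 (hS.trans_le hu.1) hu.2
  · intro u v hu huv hv
    have hu0 : 0 < u := hS.trans_le hu
    have hv0 : 0 < v := hu0.trans huv
    have hu1 : u < 1 := huv.trans hv
    have ht1u : t₁*u < 1 := by nlinarith
    have ht1v : t₁*v < 1 := by nlinarith
    have ht2u : t₂*u < 1 := by nlinarith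
    have ht2v : t₂*v < 1 := by nlinarith
    unfold Kt
    rw [div_mul_div_comm, div_mul_div_comm, div_lt_div_iff₀
      (mul_pos (mul_pos (mul_pos (by linarith : (0:ℝ) < 1-t₂) hu0)
        (by linarith : (0:ℝ) < 1-t₂*u))
       (mul_pos (mul_pos (by linarith : (0:ℝ) < 1-t₁) hv0)
        (by linarith : (0:ℝ) < 1-t₁*v)))
      (mul_pos (mul_pos (mul_pos (by linarith : (0:ℝ) < 1-t₁) hu0)
        (by linarith : (0:ℝ) < 1-t₁*u))
       (mul_pos (mul_pos (by linarith : (0:ℝ) < 1-t₂) hv0)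
        (by linarith : (0:ℝ) < 1-t₂*v)))]
    nlinarith [mul_pos (mul_pos (mul_pos (mul_pos (mul_pos h1 h20)
        (by linarith : (0:ℝ) < 1-u)) (by linarith : (0:ℝ) < 1-v))
        (mul_pos (mul_pos (by linarith : (0:ℝ) < 1-t₁) (by linarith : (0:ℝ) < 1-t₂))
          (mul_pos hu0 hv0))) (mul_pos (sub_pos.mpr h12) (sub_pos.mpr huv)),
      mul_pos (sub_pos.mpr h12) (sub_pos.mpr huv)]
  · exact Ht_one
  · exact Ht_one

lemma Ht_half {s : ℝ} (h0 : 0 < s) (h2 : s < 2) :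
    Ht (1/2) s = -Real.log s - Real.log (2 - s) := by
  unfold Ht
  have l2 : Real.log (1/2 : ℝ) = -Real.log 2 := by
    rw [one_div, Real.log_inv]
  have e1 : (1:ℝ) - 1/2 = 1/2 := by norm_num
  have e2 : (1:ℝ) - (1/2)*s = (2-s)/2 := by ring
  rw [e1, e2, Real.log_div (by linarith : (2:ℝ)-s ≠ 0) (by norm_num : (2:ℝ) ≠ 0), l2]
  have e3 : (1/2 : ℝ)/(1/2) = 1 := by norm_num
  rw [e3, one_mul]
  ring

/-- P < 2B for S ∈ (0,1). -/
lemma two_B_gt_P {S : ℝ} (h0 : 0 < S) (h1 : S < 1) :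
    Ht (1/2) S < 2 * H0 S := by
  set w : ℝ → ℝ := fun x => 2*x - 2 - Real.log x + Real.log (2 - x) with hw
  have hderiv : ∀ x ∈ Icc S 1, HasDerivAt w (2 - x⁻¹ + (2-x)⁻¹ * (-1)) x := by
    intro x hx
    have hx0 : 0 < x := h0.trans_le hx.1
    have hx2 : (2:ℝ) - x ≠ 0 := by have := hx.2; intro h; nlinarith
    have d1 : HasDerivAt (fun x : ℝ => 2*x - 2) 2 x := by
      simpa using ((hasDerivAt_id x).const_mul 2).sub_const 2
    have d2 : HasDerivAt (fun x : ℝ => Real.log (2 - x)) ((2-x)⁻¹ * (-1)) x := by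
      have hi : HasDerivAt (fun x : ℝ => 2 - x) (-1) x := by
        simpa using (hasDerivAt_id x).const_sub (2:ℝ)
      exact (Real.hasDerivAt_log hx2).comp x hi
    exact ((d1.sub (Real.hasDerivAt_log hx0.ne')).add d2)
  have anti : StrictAntiOn w (Icc S 1) := by
    apply strictAntiOn_of_deriv_neg (convex_Icc S 1)
    · intro x hx; exact (hderiv x hx).continuousAt.continuousWithinAt
    · intro x hx
      rw [interior_Icc] at hx
      have hx0 : 0 < x := h0.trans hx.1
      have hx1 : x < 1 := hx.2
      rw [(hderiv x ⟨hx.1.le, hx.2.le⟩).deriv]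
      have h2x : (0:ℝ) < 2 - x := by linarith
      have key : 2 - x⁻¹ + (2-x)⁻¹ * (-1) = -(2*(x-1)^2) / (x*(2-x)) := by
        field_simp; ring
      rw [key]
      apply div_neg_of_neg_of_pos
      · nlinarith [sq_nonneg (x-1)]
      · positivity
  have hval := anti (left_mem_Icc.mpr h1.le) (right_mem_Icc.mpr h1.le) h1
  have hw1 : w 1 = 0 := by simp only [hw]; norm_num
  rw [hw1] at hval
  rw [Ht_half h0 (by linarith)]
  unfold H0
  simp only [hw] at hval
  linarith

/-- 2B < (2 - S) * P for S ∈ (0,1). -/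
lemma two_B_lt {S : ℝ} (h0 : 0 < S) (h1 : S < 1) :
    2 * H0 S < (2 - S) * Ht (1/2) S := by
  set w : ℝ → ℝ := fun x =>
    -(2-x)*(Real.log x + Real.log (2-x)) - 2*(x - 1 - Real.log x) with hw
  have hderiv : ∀ x ∈ Icc S 1,
      HasDerivAt w (Real.log x + Real.log (2-x)) x := by
    intro x hx
    have hx0 : 0 < x := h0.trans_le hx.1
    have hx1 : x ≤ 1 := hx.2
    have h2x : (0:ℝ) < 2 - x := by linarith
    have di : HasDerivAt (fun x : ℝ => 2 - x) (-1) x := by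
      simpa using (hasDerivAt_id x).const_sub (2:ℝ)
    have d2 : HasDerivAt (fun x : ℝ => Real.log (2 - x)) ((2-x)⁻¹ * (-1)) x :=
      (Real.hasDerivAt_log h2x.ne').comp x di
    have dsum : HasDerivAt (fun x : ℝ => Real.log x + Real.log (2-x))
        (x⁻¹ + (2-x)⁻¹ * (-1)) x := (Real.hasDerivAt_log hx0.ne').add d2
    have dneg : HasDerivAt (fun x : ℝ => -(2-x)) 1 x := by
      exact di.neg.congr_deriv (by norm_num)
    have dprod := dneg.mul dsum
    have d3 : HasDerivAt (fun x : ℝ => 2*(x - 1 - Real.log x)) (2*(1 - x⁻¹)) x := by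
      exact (((hasDerivAt_id x).sub_const 1).sub (Real.hasDerivAt_log hx0.ne')).const_mul 2
    have h := dprod.sub d3
    exact h.congr_deriv (by field_simp; ring)
  have anti : StrictAntiOn w (Icc S 1) := by
    apply strictAntiOn_of_deriv_neg (convex_Icc S 1)
    · intro x hx; exact (hderiv x hx).continuousAt.continuousWithinAt
    · intro x hx
      rw [interior_Icc] at hx
      have hx0 : 0 < x := h0.trans hx.1
      have hx1 : x < 1 := hx.2
      have h2x : (0:ℝ) < 2 - x := by linarith
      rw [(hderiv x ⟨hx.1.le, hx.2.le⟩).deriv]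
      rw [← Real.log_mul hx0.ne' h2x.ne']
      apply Real.log_neg (by positivity)
      nlinarith [sq_nonneg (x-1), sq_nonneg x]
  have hval := anti (left_mem_Icc.mpr h1.le) (right_mem_Icc.mpr h1.le) h1
  have hw1 : w 1 = 0 := by simp only [hw]; norm_num
  rw [hw1] at hval
  rw [Ht_half h0 (by linarith)]
  unfold H0
  simp only [hw] at hval
  nlinarith [hval]

noncomputable def Dt (S s : ℝ) : ℝ := Ht (1/2) s / Ht (1/2) S - H0 s / H0 S

lemma Dt_deriv {S s : ℝ} (h0 : 0 < S) (h1 : S < 1) (hs0 : 0 < s) (hs1 : s ≤ 1) :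
    HasDerivAt (Dt S) (K0 s / H0 S - Kt (1/2) s / Ht (1/2) S) s := by
  have hts : (1/2 : ℝ)*s < 1 := by nlinarith
  have h := ((Ht_deriv (by norm_num) (by norm_num) hs0 hts).div_const
      (Ht (1/2) S)).sub ((H0_deriv hs0).div_const (H0 S))
  exact h.congr_deriv (by ring)

lemma Dt_max {S sstar : ℝ} (h0 : 0 < S) (h1 : S < 1)
    (hstar : sstar = 2 - 2 * H0 S / Ht (1/2) S) :
    ∀ s ∈ Icc S 1, Dt S s ≤ Dt S sstar := by
  have hP : 0 < Ht (1/2) S := Ht_pos (by norm_num) (by norm_num) h0 h1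
  have hB : 0 < H0 S := H0_pos h0 h1
  set P := Ht (1/2) S
  set B := H0 S
  have h2BP : P < 2*B := two_B_gt_P h0 h1
  have h2B : 2*B < (2-S)*P := two_B_lt h0 h1
  have hst1 : sstar < 1 := by
    rw [hstar]
    have : 1 < 2*B/P := (one_lt_div hP).mpr (by linarith)
    linarith
  have hstS : S < sstar := by
    rw [hstar]
    have : 2*B/P < 2 - S := (div_lt_iff₀ hP).mpr (by linarith)
    linarith
  have hst0 : 0 < sstar := lt_trans h0 hstS
  -- sign of the derivative
  have hsign : ∀ s, 0 < s → s < 1 →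
      K0 s / B - Kt (1/2) s / P =
      ((1-s)/s) * (((2-s)*P - 2*B)/((2-s)*P*B)) := by
    intro s hs0 hs1
    have h2s : (0:ℝ) < 2 - s := by linarith
    have hhalf : (1:ℝ) - (1/2)*s ≠ 0 := by nlinarith
    unfold K0 Kt
    field_simp
    ring
  have mono : StrictMonoOn (Dt S) (Icc S sstar) := by
    apply strictMonoOn_of_deriv_pos (convex_Icc S sstar)
    · intro x hx
      exact (Dt_deriv h0 h1 (h0.trans_le hx.1) (by linarith [hx.2])).continuousAt.continuousWithinAt
    · intro x hx
      rw [interior_Icc] at hx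
      have hx0 : 0 < x := h0.trans hx.1
      have hx1 : x < 1 := hx.2.trans hst1
      rw [(Dt_deriv h0 h1 hx0 hx1.le).deriv, hsign x hx0 hx1]
      have h2s : (0:ℝ) < 2 - x := by linarith
      have hnum : 0 < (2-x)*P - 2*B := by
        have : 2 - sstar < 2 - x := by linarith [hx.2]
        have h2 : (2 - sstar)*P = 2*B := by
          rw [hstar]; field_simp; ring
        nlinarith [this, hP]
      exact mul_pos (div_pos (by linarith) hx0)
        (div_pos hnum (mul_pos (mul_pos h2s hP) hB))
  have anti : StrictAntiOn (Dt S) (Icc sstar 1) := by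
    apply strictAntiOn_of_deriv_neg (convex_Icc sstar 1)
    · intro x hx
      exact (Dt_deriv h0 h1 (hst0.trans_le hx.1) hx.2).continuousAt.continuousWithinAt
    · intro x hx
      rw [interior_Icc] at hx
      have hx0 : 0 < x := hst0.trans hx.1
      have hx1 : x < 1 := hx.2
      rw [(Dt_deriv h0 h1 hx0 hx1.le).deriv, hsign x hx0 hx1]
      have h2s : (0:ℝ) < 2 - x := by linarith
      have hnum : (2-x)*P - 2*B < 0 := by
        have : 2 - x < 2 - sstar := by linarith [hx.1]
        have h2 : (2 - sstar)*P = 2*B := by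
          rw [hstar]; field_simp; ring
        nlinarith [this, hP]
      have hpos : 0 < (1-x)/x := div_pos (by linarith) hx0
      have hneg : ((2-x)*P - 2*B)/((2-x)*P*B) < 0 :=
        div_neg_of_neg_of_pos hnum (mul_pos (mul_pos h2s hP) hB)
      exact mul_neg_of_pos_of_neg hpos hneg
  intro s hs
  rcases le_total s sstar with h | h
  · exact mono.monotoneOn ⟨hs.1, h⟩ ⟨hstS.le, le_refl _⟩ h
  · exact anti.antitoneOn ⟨le_refl _, hst1.le⟩ ⟨h, hs.2⟩ h

lemma Ht_lemma_Em_eq (i r : ℝ) :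
    Em i r = -(Ht ((2:ℝ)^i) ((2:ℝ)^(-r))) / Real.log 2 := by
  have hl2 : (0:ℝ) < Real.log 2 := Real.log_pos one_lt_two
  have hir : (2:ℝ)^(i-r) = (2:ℝ)^i * (2:ℝ)^(-r) := by
    rw [sub_eq_add_neg, Real.rpow_add two_pos]
  have hls : Real.log ((2:ℝ)^(-r)) = -r * Real.log 2 := by
    rw [Real.log_rpow two_pos]
  unfold Em Phim dPhim Ht Real.logb
  rw [hir, hls]
  field_simp
  ring

lemma Qm_eq (Δ i r : ℝ) :
    Qm Δ i r = Ht ((2:ℝ)^i) ((2:ℝ)^(-r)) / Ht ((2:ℝ)^i) ((2:ℝ)^(-Δ)) := by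
  have hl2 : Real.log 2 ≠ 0 := ne_of_gt (Real.log_pos one_lt_two)
  unfold Qm
  rw [Ht_lemma_Em_eq, Ht_lemma_Em_eq]
  rcases eq_or_ne (Ht ((2:ℝ)^i) ((2:ℝ)^(-Δ))) 0 with h | h
  · simp [h]
  · field_simp

lemma QmInf_eq (Δ r : ℝ) :
    QmInf Δ r = H0 ((2:ℝ)^(-r)) / H0 ((2:ℝ)^(-Δ)) := by
  unfold QmInf H0
  rw [Real.log_rpow two_pos, Real.log_rpow two_pos]
  ring_nf

lemma two_rpow_neg_one : (2:ℝ)^((-1):ℝ) = 1/2 := by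
  rw [show ((-1:ℝ)) = ((-1 : ℤ) : ℝ) by norm_num, Real.rpow_intCast]
  norm_num

lemma rStar_eq {Δ : ℝ} (hΔ : 0 < Δ) :
    (2:ℝ)^(-(rStarM Δ)) = 2 - 2 * H0 ((2:ℝ)^(-Δ)) / Ht (1/2) ((2:ℝ)^(-Δ)) := by
  unfold rStarM
  set S := (2:ℝ)^(-Δ) with hSdef
  set X := (2:ℝ)^Δ with hXdef
  have hX1 : 1 < X := (Real.one_lt_rpow_iff_of_pos two_pos).mpr (Or.inl ⟨one_lt_two, hΔ⟩)
  have hX0 : (0:ℝ) < X := lt_trans one_pos hX1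
  have hSX : S = X⁻¹ := by rw [hSdef, hXdef, ← Real.rpow_neg two_pos.le]
  have hS0 : 0 < S := Real.rpow_pos_of_pos two_pos _
  have hS1 : S < 1 := Real.rpow_lt_one_of_one_lt_of_neg one_lt_two (by linarith)
  have hlogX : Real.log X = Δ * Real.log 2 := Real.log_rpow two_pos Δ
  have h2X : (0:ℝ) < 2*X - 1 := by linarith
  have h2S : 2 - S = (2*X-1)/X := by rw [hSX]; field_simp
  have hlogS : Real.log S = -Real.log X := by rw [hSX, Real.log_inv]
  have hPval : Ht (1/2) S = 2*Real.log X - Real.log (2*X-1) := by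
    rw [Ht_half hS0 (by linarith), hlogS, h2S,
      Real.log_div (ne_of_gt h2X) (ne_of_gt hX0)]
    ring
  have hBval : H0 S = X⁻¹ - 1 + Real.log X := by
    unfold H0; rw [hSX, Real.log_inv]; ring
  have hP : 0 < Ht (1/2) S := Ht_pos (by norm_num) (by norm_num) hS0 hS1
  have hB : 0 < H0 S := H0_pos hS0 hS1
  set P := Ht (1/2) S
  set B := H0 S
  have h2B : 2*B < (2-S)*P := two_B_lt hS0 hS1
  have hPB : 0 < 2*P - 2*B := by nlinarith [hS0, hP]
  have hnum : 2*X*Real.log X - X*Real.log (2*X-1) = X*P := by rw [hPval]; ring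
  have hden : 2*X*Real.log X - 2*X*Real.log (2*X-1) + 2*X - 2 = X*(2*P-2*B) := by
    rw [hPval, hBval]; field_simp; ring
  rw [hnum, hden, mul_div_mul_left _ _ (ne_of_gt hX0)]
  have hq : 0 < (2*P-2*B)/P := div_pos hPB hP
  rw [show P/(2*P-2*B) = ((2*P-2*B)/P)⁻¹ by rw [inv_div], Real.logb_inv, neg_neg,
    Real.rpow_logb two_pos (by norm_num) hq]
  field_simp

theorem stmt_12 (Δ : ℝ) (hΔ : 0 < Δ) :
    ∀ i c r : ℝ, i ≤ -1 → c ≤ -1 → 0 ≤ r → r < Δ →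
      |Qm Δ i r - Qm Δ c r| < QmMax Δ (rStarM Δ) - QmInf Δ (rStarM Δ) := by
  intro i c r hi hc hr hrD
  have hl2 : (0:ℝ) < Real.log 2 := Real.log_pos one_lt_two
  set S := (2:ℝ)^(-Δ) with hSdef
  have hS0 : 0 < S := Real.rpow_pos_of_pos two_pos _
  have hS1 : S < 1 := Real.rpow_lt_one_of_one_lt_of_neg one_lt_two (by linarith)
  have hP : 0 < Ht (1/2) S := Ht_pos (by norm_num) (by norm_num) hS0 hS1
  have hB : 0 < H0 S := H0_pos hS0 hS1
  set P := Ht (1/2) S with hPdef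
  set B := H0 S with hBdef
  set sstar := 2 - 2*B/P with hsstar
  have h2BP : P < 2*B := two_B_gt_P hS0 hS1
  have h2B : 2*B < (2-S)*P := two_B_lt hS0 hS1
  have hst1 : sstar < 1 := by
    rw [hsstar]
    have : 1 < 2*B/P := (one_lt_div hP).mpr (by linarith)
    linarith
  have hstS : S < sstar := by
    rw [hsstar]
    have : 2*B/P < 2 - S := (div_lt_iff₀ hP).mpr (by linarith)
    linarith
  have hst0 : 0 < sstar := hS0.trans hstS
  have hrs : (2:ℝ)^(-(rStarM Δ)) = sstar := rStar_eq hΔ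
  -- value of the right-hand side
  have hRHS : QmMax Δ (rStarM Δ) - QmInf Δ (rStarM Δ) = Dt S sstar := by
    unfold QmMax Dt
    rw [Qm_eq, QmInf_eq, hrs, two_rpow_neg_one, ← hSdef, ← hPdef, ← hBdef]
  have hRHSpos : 0 < Dt S sstar := by
    have := inst1 (t := 1/2) (S := S) (s := sstar) (by norm_num) (by norm_num)
      hS0 hstS hst1
    unfold Dt
    rw [← hPdef, ← hBdef] at this ⊢
    linarith
  rcases eq_or_lt_of_le hr with hr0 | hr0
  · -- r = 0 : both ratios are 0
    have hEm0 : ∀ x : ℝ, Em x 0 = 0 := by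
      intro x; simp [Em]
    rw [← hr0]
    simp only [Qm, hEm0, zero_div, sub_zero, abs_zero]
    rw [hRHS]
    exact hRHSpos
  · -- r > 0
    set s := (2:ℝ)^(-r) with hsdef
    have hs0 : 0 < s := Real.rpow_pos_of_pos two_pos _
    have hs1 : s < 1 := Real.rpow_lt_one_of_one_lt_of_neg one_lt_two (by linarith)
    have hSs : S < s := by
      rw [hSdef, hsdef]
      exact (Real.rpow_lt_rpow_left_iff one_lt_two).mpr (by linarith)
    -- bounds for each of the two ratios
    have hbound : ∀ x : ℝ, x ≤ -1 →
        H0 s / B < Qm Δ x r ∧ Qm Δ x r ≤ Ht (1/2) s / P := by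
      intro x hx
      have htx0 : 0 < (2:ℝ)^x := Real.rpow_pos_of_pos two_pos _
      have htx1 : (2:ℝ)^x < 1 :=
        Real.rpow_lt_one_of_one_lt_of_neg one_lt_two (by linarith)
      have htxh : (2:ℝ)^x ≤ 1/2 := by
        have := (Real.rpow_le_rpow_left_iff one_lt_two).mpr hx
        rwa [two_rpow_neg_one] at this
      constructor
      · rw [Qm_eq, ← hSdef, ← hsdef, hBdef]
        exact inst1 htx0 htx1 hS0 hSs hs1
      · rw [Qm_eq, ← hSdef, ← hsdef, hPdef]
        rcases lt_or_eq_of_le htxh with hlt | heq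
        · exact le_of_lt (inst2 htx0 hlt (by norm_num) hS0 hSs hs1)
        · rw [heq]
    obtain ⟨hi1, hi2⟩ := hbound i hi
    obtain ⟨hc1, hc2⟩ := hbound c hc
    have habs : |Qm Δ i r - Qm Δ c r| < Ht (1/2) s / P - H0 s / B := by
      rw [abs_sub_lt_iff]
      constructor <;> linarith
    have hDts : Ht (1/2) s / P - H0 s / B = Dt S s := by
      unfold Dt; rw [← hPdef, ← hBdef]
    have hstar2 : sstar = 2 - 2 * H0 S / Ht (1/2) S := by rw [hsstar, hPdef, hBdef]
    have hmax := Dt_max hS0 hS1 hstar2 s ⟨hSs.le, hs1.le⟩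
    rw [hRHS]
    rw [hDts] at habs
    linarith
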